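/- Let d be a positive integer and let G : ℤ → M_d(ℂ) be finitely supported with G(−m) = G(m)ᴴ for all m ∈ ℤ, so that the symbol Ĝ(k) = Σ_{m∈ℤ} e^{imk} G(m) is a Hermitian matrix for every k ∈ ℝ. Assume Ĝ(k) is positive definite for every k ∈ ℝ. If x : ℕ → ℂ^d is square-summable (Σ_{i∈ℕ} ‖x(i)‖² < ∞) and satisfies Σ_{j∈ℕ} G(i−j)·x(j) = 0 for every i ∈ ℕ (a finite sum for each i), then x = 0. That is, the half-infinite banded block-Toeplitz operator with positive-definite symbol has trivial square-summable kernel; since the on-site metric is invertible, zero is not an eigenvalue of the effective BdG Hamiltonian of the corresponding gapped free-boson system subject to open boundary conditions. -/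

import Mathlib

open Matrix
open scoped ComplexOrder
open Complex Finset
open scoped Real

/-- The symbol `Ĝ(k) = Σ_{m ∈ ℤ} e^{imk} G(m)` of a banded block-Toeplitz operator. -/
noncomputable def toeplitzSymbol (d : ℕ) (G : ℤ → Matrix (Fin d) (Fin d) ℂ) (k : ℝ) :
    Matrix (Fin d) (Fin d) ℂ :=
  ∑ᶠ m : ℤ, Complex.exp (Complex.I * (m : ℂ) * (k : ℂ)) • G m

lemma toeplitzSymbol_eq_sum (d : ℕ) (G : ℤ → Matrix (Fin d) (Fin d) ℂ)
    (hfin : (Function.support G).Finite) (k : ℝ) :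
    toeplitzSymbol d G k
      = ∑ m ∈ hfin.toFinset, Complex.exp (Complex.I * (m : ℂ) * (k : ℂ)) • G m := by
  apply finsum_eq_finset_sum_of_support_subset
  intro m hm
  simp only [Function.mem_support, Ne] at hm
  simp only [Set.Finite.coe_toFinset, Function.mem_support]
  intro h
  exact hm (by rw [h, smul_zero])

lemma exp_int_integral (n : ℤ) :
    ∫ k in (0:ℝ)..(2*π), Complex.exp (Complex.I * n * k) = if n = 0 then (2*π:ℂ) else 0 := by
  rcases eq_or_ne n 0 with h | h
  · subst h
    simp
  · rw [if_neg h]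
    have hc : (Complex.I * n : ℂ) ≠ 0 := by
      simp [Complex.I_ne_zero, h]
    have h2 := integral_exp_mul_complex (a := 0) (b := 2*π) hc
    simp only [mul_assoc] at h2 ⊢
    rw [h2]
    have h1 : Complex.exp (Complex.I * ((n:ℂ) * ((2*π:ℝ):ℂ))) = 1 := by
      rw [show (Complex.I * ((n:ℂ) * ((2*π:ℝ):ℂ))) = (n:ℂ) * (2*(π:ℂ)*Complex.I) by push_cast; ring]
      exact Complex.exp_int_mul_two_pi_mul_I n
    rw [h1]
    simp

lemma sum_mulVec' {ι m n : Type*} [Fintype n] (s : Finset ι) (f : ι → Matrix m n ℂ) (v : n → ℂ) :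
    (∑ i ∈ s, f i) *ᵥ v = ∑ i ∈ s, (f i) *ᵥ v := by
  ext a
  simp only [Matrix.mulVec, dotProduct, Matrix.sum_apply, Finset.sum_mul, Finset.sum_apply]
  exact Finset.sum_comm

lemma mulVec_sum' {ι m n : Type*} [Fintype n] (s : Finset ι) (M : Matrix m n ℂ) (v : ι → n → ℂ) :
    M *ᵥ (∑ i ∈ s, v i) = ∑ i ∈ s, M *ᵥ (v i) :=
  map_sum (Matrix.mulVecLin M) v s

lemma sum_dotProduct' {ι n : Type*} [Fintype n] (s : Finset ι) (v : ι → n → ℂ) (w : n → ℂ) :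
    (∑ i ∈ s, v i) ⬝ᵥ w = ∑ i ∈ s, (v i) ⬝ᵥ w := by
  simp only [dotProduct, Finset.sum_apply, Finset.sum_mul]
  exact Finset.sum_comm

lemma dotProduct_sum' {ι n : Type*} [Fintype n] (s : Finset ι) (v : n → ℂ) (w : ι → n → ℂ) :
    v ⬝ᵥ (∑ i ∈ s, w i) = ∑ i ∈ s, v ⬝ᵥ (w i) := by
  simp only [dotProduct, Finset.sum_apply, Finset.mul_sum]
  exact Finset.sum_comm

section expand
variable (d : ℕ) (G : ℤ → Matrix (Fin d) (Fin d) ℂ)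
  (hfin : (Function.support G).Finite) (x : ℕ → Fin d → ℂ) (N : ℕ)

lemma expandA (k : ℝ) :
    star (∑ j ∈ Finset.range (N+1), Complex.exp (Complex.I * j * k) • x j) ⬝ᵥ
      (toeplitzSymbol d G k) *ᵥ (∑ j ∈ Finset.range (N+1), Complex.exp (Complex.I * j * k) • x j)
    = ∑ c ∈ Finset.range (N+1), ∑ m ∈ hfin.toFinset, ∑ r ∈ Finset.range (N+1),
        Complex.exp (Complex.I * ((m:ℂ) + c - r) * k) * (star (x r) ⬝ᵥ (G m) *ᵥ (x c)) := by
  rw [toeplitzSymbol_eq_sum d G hfin]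
  simp only [star_sum, star_smul, sum_dotProduct', smul_dotProduct, dotProduct_sum',
    dotProduct_smul, sum_mulVec', Matrix.smul_mulVec, mulVec_sum', Matrix.mulVec_smul,
    smul_eq_mul, Complex.star_def, Finset.mul_sum]
  refine Finset.sum_congr rfl fun c _ => Finset.sum_congr rfl fun m _ => Finset.sum_congr rfl fun r _ => ?_
  rw [← Complex.exp_conj, _root_.map_mul, _root_.map_mul, Complex.conj_I, Complex.conj_ofReal,
    Complex.conj_natCast]
  rw [← mul_assoc, ← mul_assoc, ← Complex.exp_add, ← Complex.exp_add]
  congr 1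
  push_cast
  ring

lemma expandB (k : ℝ) :
    star (∑ j ∈ Finset.range (N+1), Complex.exp (Complex.I * j * k) • x j) ⬝ᵥ
      (∑ j ∈ Finset.range (N+1), Complex.exp (Complex.I * j * k) • x j)
    = ∑ c ∈ Finset.range (N+1), ∑ r ∈ Finset.range (N+1),
        Complex.exp (Complex.I * ((c:ℂ) - r) * k) * (star (x r) ⬝ᵥ (x c)) := by
  simp only [star_sum, star_smul, sum_dotProduct', smul_dotProduct, dotProduct_sum',
    dotProduct_smul, smul_eq_mul, Complex.star_def, Finset.mul_sum]
  refine Finset.sum_congr rfl fun c _ => Finset.sum_congr rfl fun r _ => ?_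
  rw [← Complex.exp_conj, _root_.map_mul, _root_.map_mul, Complex.conj_I, Complex.conj_ofReal,
    Complex.conj_natCast]
  rw [← mul_assoc, ← Complex.exp_add]
  congr 1
  push_cast
  ring

end expand

section integrals
variable (d : ℕ) (G : ℤ → Matrix (Fin d) (Fin d) ℂ) (x : ℕ → Fin d → ℂ) (N : ℕ)

lemma cont_exp_mul (c : ℂ) (z : ℂ) :
    Continuous fun k : ℝ => Complex.exp (Complex.I * c * k) * z := by
  apply Continuous.mul _ continuous_const
  exact Complex.continuous_exp.comp (by fun_prop)

lemma intA (hfin : (Function.support G).Finite) :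
    (∫ k in (0:ℝ)..(2*π), star (∑ j ∈ Finset.range (N+1), Complex.exp (Complex.I * j * k) • x j) ⬝ᵥ
      (toeplitzSymbol d G k) *ᵥ (∑ j ∈ Finset.range (N+1), Complex.exp (Complex.I * j * k) • x j))
    = (2*π:ℂ) * ∑ c ∈ Finset.range (N+1), ∑ r ∈ Finset.range (N+1),
        star (x r) ⬝ᵥ (G ((r:ℤ) - (c:ℤ))) *ᵥ (x c) := by
  classical
  have hrw : (fun k : ℝ => star (∑ j ∈ Finset.range (N+1), Complex.exp (Complex.I * j * k) • x j) ⬝ᵥ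
      (toeplitzSymbol d G k) *ᵥ (∑ j ∈ Finset.range (N+1), Complex.exp (Complex.I * j * k) • x j))
      = fun k : ℝ => ∑ c ∈ Finset.range (N+1), ∑ m ∈ hfin.toFinset, ∑ r ∈ Finset.range (N+1),
        Complex.exp (Complex.I * ((m:ℂ) + c - r) * k) * (star (x r) ⬝ᵥ (G m) *ᵥ (x c)) :=
    funext fun k => expandA d G hfin x N k
  have hint2 : ∀ (c : ℕ) (m : ℤ), IntervalIntegrable
      (fun k : ℝ => ∑ r ∈ Finset.range (N+1),
        Complex.exp (Complex.I * ((m:ℂ) + c - r) * k) * (star (x r) ⬝ᵥ (G m) *ᵥ (x c)))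
      MeasureTheory.volume 0 (2*π) := by
    intro c m
    apply Continuous.intervalIntegrable
    exact continuous_finset_sum _ fun r _ => cont_exp_mul _ _
  have hint1 : ∀ (c : ℕ), IntervalIntegrable
      (fun k : ℝ => ∑ m ∈ hfin.toFinset, ∑ r ∈ Finset.range (N+1),
        Complex.exp (Complex.I * ((m:ℂ) + c - r) * k) * (star (x r) ⬝ᵥ (G m) *ᵥ (x c)))
      MeasureTheory.volume 0 (2*π) := by
    intro c
    apply Continuous.intervalIntegrable
    exact continuous_finset_sum _ fun m _ => continuous_finset_sum _ fun r _ => cont_exp_mul _ _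
  rw [intervalIntegral.integral_congr (fun k _ => congrFun hrw k)]
  rw [intervalIntegral.integral_finset_sum (fun c _ => hint1 c)]
  rw [Finset.mul_sum]
  refine Finset.sum_congr rfl fun c hc => ?_
  rw [intervalIntegral.integral_finset_sum (fun m _ => hint2 c m)]
  have hstep : ∀ m ∈ hfin.toFinset,
      (∫ k in (0:ℝ)..(2*π), ∑ r ∈ Finset.range (N+1),
        Complex.exp (Complex.I * ((m:ℂ) + c - r) * k) * (star (x r) ⬝ᵥ (G m) *ᵥ (x c)))
      = ∑ r ∈ Finset.range (N+1),
          (if m = (r:ℤ) - (c:ℤ) then (2*π:ℂ) else 0) * (star (x r) ⬝ᵥ (G m) *ᵥ (x c)) := by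
    intro m _
    rw [intervalIntegral.integral_finset_sum
      (fun r _ => (cont_exp_mul _ _).intervalIntegrable _ _)]
    refine Finset.sum_congr rfl fun r _ => ?_
    rw [intervalIntegral.integral_mul_const]
    have hcast : ∀ k : ℝ, Complex.I * ((m:ℂ) + c - r) * k
        = Complex.I * ((m + c - r : ℤ) : ℂ) * k := by
      intro k; push_cast; ring
    simp_rw [hcast]
    rw [exp_int_integral (m + c - r)]
    have hiff : (m + (c:ℤ) - (r:ℤ) = 0) ↔ (m = (r:ℤ) - (c:ℤ)) := by omega
    simp only [hiff]
  rw [Finset.sum_congr rfl hstep]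
  rw [Finset.sum_comm (s := hfin.toFinset) (t := Finset.range (N+1))
    (f := fun m r => (if m = (r:ℤ) - (c:ℤ) then (2*π:ℂ) else 0) * (star (x r) ⬝ᵥ (G m) *ᵥ (x c)))]
  rw [Finset.mul_sum]
  refine Finset.sum_congr rfl fun r hr => ?_
  simp only [ite_mul, zero_mul]
  rw [Finset.sum_ite_eq' hfin.toFinset ((r:ℤ) - (c:ℤ))
    (fun m => (2*π:ℂ) * (star (x r) ⬝ᵥ (G m) *ᵥ (x c)))]
  by_cases hmem : (r:ℤ) - (c:ℤ) ∈ hfin.toFinset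
  · rw [if_pos hmem]
  · rw [if_neg hmem]
    have hz : G ((r:ℤ) - (c:ℤ)) = 0 := by
      by_contra hne
      exact hmem (hfin.mem_toFinset.mpr hne)
    rw [hz, Matrix.zero_mulVec, dotProduct_zero, mul_zero]

lemma intB :
    (∫ k in (0:ℝ)..(2*π), star (∑ j ∈ Finset.range (N+1), Complex.exp (Complex.I * j * k) • x j) ⬝ᵥ
      (∑ j ∈ Finset.range (N+1), Complex.exp (Complex.I * j * k) • x j))
    = (2*π:ℂ) * ∑ c ∈ Finset.range (N+1), star (x c) ⬝ᵥ (x c) := by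
  classical
  have hrw : (fun k : ℝ => star (∑ j ∈ Finset.range (N+1), Complex.exp (Complex.I * j * k) • x j) ⬝ᵥ
      (∑ j ∈ Finset.range (N+1), Complex.exp (Complex.I * j * k) • x j))
      = fun k : ℝ => ∑ c ∈ Finset.range (N+1), ∑ r ∈ Finset.range (N+1),
        Complex.exp (Complex.I * ((c:ℂ) - r) * k) * (star (x r) ⬝ᵥ (x c)) :=
    funext fun k => expandB d x N k
  have hint1 : ∀ (c : ℕ), IntervalIntegrable
      (fun k : ℝ => ∑ r ∈ Finset.range (N+1),
        Complex.exp (Complex.I * ((c:ℂ) - r) * k) * (star (x r) ⬝ᵥ (x c)))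
      MeasureTheory.volume 0 (2*π) := by
    intro c
    apply Continuous.intervalIntegrable
    exact continuous_finset_sum _ fun r _ => cont_exp_mul _ _
  rw [intervalIntegral.integral_congr (fun k _ => congrFun hrw k)]
  rw [intervalIntegral.integral_finset_sum (fun c _ => hint1 c)]
  rw [Finset.mul_sum]
  refine Finset.sum_congr rfl fun c hc => ?_
  rw [intervalIntegral.integral_finset_sum
    (fun r _ => (cont_exp_mul _ _).intervalIntegrable _ _)]
  have hstep : ∀ r ∈ Finset.range (N+1),
      (∫ k in (0:ℝ)..(2*π), Complex.exp (Complex.I * ((c:ℂ) - r) * k) * (star (x r) ⬝ᵥ (x c)))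
      = (if r = c then (2*π:ℂ) else 0) * (star (x r) ⬝ᵥ (x c)) := by
    intro r _
    rw [intervalIntegral.integral_mul_const]
    have hcast : ∀ k : ℝ, Complex.I * ((c:ℂ) - r) * k = Complex.I * ((c - r : ℤ) : ℂ) * k := by
      intro k; push_cast; ring
    simp_rw [hcast]
    rw [exp_int_integral ((c:ℤ) - r)]
    have hiff : ((c:ℤ) - (r:ℤ) = 0) ↔ (r = c) := by omega
    simp only [hiff]
  rw [Finset.sum_congr rfl hstep]
  simp only [ite_mul, zero_mul]
  rw [Finset.sum_ite_eq' (Finset.range (N+1)) c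
    (fun r => (2*π:ℂ) * (star (x r) ⬝ᵥ (x c)))]
  rw [if_pos hc]

end integrals

lemma uniform_pos (d : ℕ) (hd : 0 < d) (G : ℤ → Matrix (Fin d) (Fin d) ℂ)
    (hfin : (Function.support G).Finite)
    (hpos : ∀ k : ℝ, (toeplitzSymbol d G k).PosDef) :
    ∃ ε : ℝ, 0 < ε ∧ ∀ k ∈ Set.Icc (0:ℝ) (2*π), ∀ v : Fin d → ℂ,
      ε * (∑ a, ‖v a‖^2) ≤ (star v ⬝ᵥ (toeplitzSymbol d G k) *ᵥ v).re := by
  classical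
  set T := hfin.toFinset with hT
  set f : ℝ × (Fin d → ℂ) → ℝ := fun p => (star p.2 ⬝ᵥ (toeplitzSymbol d G p.1) *ᵥ p.2).re with hf
  have hfc : Continuous f := by
    have hrw : f = fun p => (∑ a, star (p.2 a) *
        ∑ b, (∑ m ∈ T, Complex.exp (Complex.I*m*p.1) * G m a b) * p.2 b).re := by
      funext p
      simp only [hf, toeplitzSymbol_eq_sum d G hfin, dotProduct, Matrix.mulVec,
        Pi.star_apply, Matrix.sum_apply, Matrix.smul_apply, smul_eq_mul, hT]
    rw [hrw]
    apply Complex.continuous_re.comp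
    apply continuous_finset_sum
    intro a _
    apply Continuous.mul
    · exact continuous_star.comp ((continuous_apply a).comp continuous_snd)
    · apply continuous_finset_sum
      intro b _
      apply Continuous.mul
      · apply continuous_finset_sum
        intro m _
        exact (Complex.continuous_exp.comp (by fun_prop)).mul continuous_const
      · exact (continuous_apply b).comp continuous_snd
  set S : Set (Fin d → ℂ) := {v | (∑ a, ‖v a‖^2) = 1} with hS
  have hScpt : IsCompact S := by
    apply Metric.isCompact_of_isClosed_isBounded
    · have : Continuous fun v : Fin d → ℂ => ∑ a, ‖v a‖^2 := by fun_prop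
      exact isClosed_eq this continuous_const
    · rw [Metric.isBounded_iff_subset_closedBall 0]
      refine ⟨1, fun v hv => ?_⟩
      simp only [Metric.mem_closedBall, dist_zero_right]
      rw [pi_norm_le_iff_of_nonneg zero_le_one]
      intro a
      have h1 : ‖v a‖^2 ≤ 1 := by
        rw [← hv]
        exact Finset.single_le_sum (f := fun a => ‖v a‖^2) (fun b _ => sq_nonneg _) (mem_univ a)
      nlinarith [norm_nonneg (v a)]
  have hK : IsCompact (Set.Icc (0:ℝ) (2*π) ×ˢ S) := isCompact_Icc.prod hScpt
  have hne : (Set.Icc (0:ℝ) (2*π) ×ˢ S).Nonempty := by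
    refine ⟨(0, fun a => if a = ⟨0, hd⟩ then 1 else 0), ?_, ?_⟩
    · constructor <;> [rfl; positivity]
    · simp [hS, apply_ite]
  obtain ⟨p0, hp0K, hmin⟩ := hK.exists_isMinOn hne hfc.continuousOn
  have hq : ∀ k (v : Fin d → ℂ), v ≠ 0 → 0 < (star v ⬝ᵥ (toeplitzSymbol d G k) *ᵥ v).re := by
    intro k v hv
    have := (hpos k).dotProduct_mulVec_pos hv
    rw [Complex.lt_def] at this
    exact this.1
  have hp0S : p0.2 ∈ S := hp0K.2
  have hp0ne : p0.2 ≠ 0 := by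
    intro h
    rw [hS] at hp0S
    simp only [Set.mem_setOf_eq, h] at hp0S
    simp at hp0S
  have hε : 0 < f p0 := hq p0.1 p0.2 hp0ne
  refine ⟨f p0, hε, ?_⟩
  intro k hk v
  rcases eq_or_ne v 0 with rfl | hv
  · simp
  · -- normalize
    have hsum_pos : 0 < ∑ a, ‖v a‖^2 := by
      obtain ⟨a, ha⟩ := Function.ne_iff.mp hv
      have : 0 < ‖v a‖^2 := by
        have := norm_pos_iff.mpr ha
        positivity
      exact lt_of_lt_of_le this (Finset.single_le_sum (f := fun a => ‖v a‖^2)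
        (fun b _ => sq_nonneg _) (mem_univ a))
    set n : ℝ := Real.sqrt (∑ a, ‖v a‖^2) with hn
    have hnpos : 0 < n := Real.sqrt_pos.mpr hsum_pos
    set w : Fin d → ℂ := ((n:ℂ))⁻¹ • v with hw
    have hwS : w ∈ S := by
      rw [hS]
      have hwa : ∀ a, ‖w a‖^2 = (n^2)⁻¹ * ‖v a‖^2 := by
        intro a
        simp [hw, norm_smul, Real.norm_eq_abs, abs_of_pos hnpos, mul_pow, inv_pow]
      simp only [Set.mem_setOf_eq, hwa, ← Finset.mul_sum]
      rw [hn, Real.sq_sqrt hsum_pos.le, inv_mul_cancel₀ hsum_pos.ne']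
    have hmem : (k, w) ∈ Set.Icc (0:ℝ) (2*π) ×ˢ S := ⟨hk, hwS⟩
    have h1 : f p0 ≤ f (k, w) := hmin hmem
    have hscale : f (k, w) = (n⁻¹)^2 * (star v ⬝ᵥ (toeplitzSymbol d G k) *ᵥ v).re := by
      simp only [hf, hw]
      rw [star_smul, Matrix.mulVec_smul, smul_dotProduct, dotProduct_smul]
      simp only [smul_eq_mul, star_inv₀, Complex.star_def, Complex.conj_ofReal]
      rw [← mul_assoc]
      rw [show ((n:ℂ))⁻¹ * ((n:ℂ))⁻¹ = (((n⁻¹)^2 : ℝ) : ℂ) by push_cast; ring]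
      rw [Complex.re_ofReal_mul]
    rw [hscale] at h1
    have : f p0 * (∑ a, ‖v a‖^2) ≤ (n⁻¹)^2 * (star v ⬝ᵥ (toeplitzSymbol d G k) *ᵥ v).re * (∑ a, ‖v a‖^2) := by
      apply mul_le_mul_of_nonneg_right h1 hsum_pos.le
    calc f p0 * (∑ a, ‖v a‖^2) ≤ _ := this
      _ = (star v ⬝ᵥ (toeplitzSymbol d G k) *ᵥ v).re := by
        have hn2 : n^2 = ∑ a, ‖v a‖^2 := by rw [hn, Real.sq_sqrt hsum_pos.le]
        rw [← hn2, inv_pow, mul_comm ((n^2)⁻¹) _, mul_assoc,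
          inv_mul_cancel₀ (pow_ne_zero 2 hnpos.ne'), mul_one]

lemma re_dot {d : ℕ} (v : Fin d → ℂ) : (star v ⬝ᵥ v).re = ∑ a, ‖v a‖^2 := by
  rw [dotProduct, Complex.re_sum]
  refine Finset.sum_congr rfl fun a _ => ?_
  rw [Pi.star_apply, Complex.star_def, mul_comm, Complex.mul_conj]
  rw [Complex.ofReal_re, Complex.normSq_eq_norm_sq]

lemma key_ineq (d : ℕ) (G : ℤ → Matrix (Fin d) (Fin d) ℂ)
    (hfin : (Function.support G).Finite) (x : ℕ → Fin d → ℂ) (N : ℕ)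
    {ε : ℝ} (hεb : ∀ k ∈ Set.Icc (0:ℝ) (2*π), ∀ v : Fin d → ℂ,
      ε * (∑ a, ‖v a‖^2) ≤ (star v ⬝ᵥ (toeplitzSymbol d G k) *ᵥ v).re) :
    ε * ∑ c ∈ Finset.range (N+1), (∑ a, ‖x c a‖^2)
      ≤ (∑ c ∈ Finset.range (N+1), ∑ r ∈ Finset.range (N+1),
          star (x r) ⬝ᵥ (G ((r:ℤ) - (c:ℤ))) *ᵥ (x c)).re := by
  classical
  set p : ℝ → Fin d → ℂ :=
    fun k => ∑ j ∈ Finset.range (N+1), Complex.exp (Complex.I * j * k) • x j with hp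
  set gA : ℝ → ℂ := fun k => star (p k) ⬝ᵥ (toeplitzSymbol d G k) *ᵥ (p k) with hgA
  set gB : ℝ → ℂ := fun k => star (p k) ⬝ᵥ (p k) with hgB
  have hgAc : Continuous gA := by
    have : gA = fun k : ℝ => ∑ c ∈ Finset.range (N+1), ∑ m ∈ hfin.toFinset,
        ∑ r ∈ Finset.range (N+1),
        Complex.exp (Complex.I * ((m:ℂ) + c - r) * k) * (star (x r) ⬝ᵥ (G m) *ᵥ (x c)) :=
      funext fun k => expandA d G hfin x N k
    rw [this]
    exact continuous_finset_sum _ fun c _ => continuous_finset_sum _ fun m _ =>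
      continuous_finset_sum _ fun r _ => cont_exp_mul _ _
  have hgBc : Continuous gB := by
    have : gB = fun k : ℝ => ∑ c ∈ Finset.range (N+1), ∑ r ∈ Finset.range (N+1),
        Complex.exp (Complex.I * ((c:ℂ) - r) * k) * (star (x r) ⬝ᵥ (x c)) :=
      funext fun k => expandB d x N k
    rw [this]
    exact continuous_finset_sum _ fun c _ => continuous_finset_sum _ fun r _ => cont_exp_mul _ _
  have h2π : (0:ℝ) < 2*π := by positivity
  have hmono : (∫ k in (0:ℝ)..(2*π), ε * (gB k).re)
      ≤ ∫ k in (0:ℝ)..(2*π), (gA k).re := by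
    apply intervalIntegral.integral_mono_on h2π.le
    · exact (continuous_const.mul (Complex.continuous_re.comp hgBc)).intervalIntegrable _ _
    · exact (Complex.continuous_re.comp hgAc).intervalIntegrable _ _
    · intro k hk
      have := hεb k hk (p k)
      rwa [← re_dot (p k)] at this
  have hIB : (∫ k in (0:ℝ)..(2*π), ε * (gB k).re)
      = ε * (2*π * ∑ c ∈ Finset.range (N+1), (∑ a, ‖x c a‖^2)) := by
    rw [intervalIntegral.integral_const_mul]
    congr 1
    have h1 : (∫ k in (0:ℝ)..(2*π), (gB k).re)
        = ((∫ k in (0:ℝ)..(2*π), gB k)).re := by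
      simpa using
        (Complex.reCLM.intervalIntegral_comp_comm (μ := MeasureTheory.volume)
          (hgBc.intervalIntegrable 0 (2*π)))
    rw [h1, hgB]
    simp only [hp]
    rw [intB d x N]
    rw [Complex.mul_re]
    have : ((2*π:ℂ)).im = 0 := by simp
    simp only [this, zero_mul, sub_zero]
    rw [Complex.re_sum]
    have : ((2*π:ℂ)).re = 2*π := by simp
    rw [this]
    congr 1
    exact Finset.sum_congr rfl fun c _ => re_dot (x c)
  have hIA : (∫ k in (0:ℝ)..(2*π), (gA k).re)
      = 2*π * (∑ c ∈ Finset.range (N+1), ∑ r ∈ Finset.range (N+1),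
          star (x r) ⬝ᵥ (G ((r:ℤ) - (c:ℤ))) *ᵥ (x c)).re := by
    have h1 : (∫ k in (0:ℝ)..(2*π), (gA k).re)
        = ((∫ k in (0:ℝ)..(2*π), gA k)).re := by
      simpa using
        (Complex.reCLM.intervalIntegral_comp_comm (μ := MeasureTheory.volume)
          (hgAc.intervalIntegrable 0 (2*π)))
    rw [h1, hgA]
    simp only [hp]
    rw [intA d G x N hfin]
    rw [Complex.mul_re]
    have h2 : ((2*π:ℂ)).im = 0 := by simp
    have h3 : ((2*π:ℂ)).re = 2*π := by simp
    rw [h2, h3]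
    ring
  rw [hIB, hIA] at hmono
  rw [mul_left_comm] at hmono
  exact (mul_le_mul_iff_right₀ h2π).mp hmono

lemma dot_bound {d : ℕ} (M : Matrix (Fin d) (Fin d) ℂ) (v w : Fin d → ℂ) :
    ‖star v ⬝ᵥ M *ᵥ w‖ ≤ (∑ a, ∑ b, ‖M a b‖) * (((∑ a, ‖v a‖^2) + (∑ b, ‖w b‖^2))/2) := by
  have hexp : star v ⬝ᵥ M *ᵥ w = ∑ a, ∑ b, star (v a) * (M a b * w b) := by
    simp [dotProduct, Matrix.mulVec, Finset.mul_sum]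
  rw [hexp]
  calc ‖∑ a, ∑ b, star (v a) * (M a b * w b)‖
      ≤ ∑ a, ‖∑ b, star (v a) * (M a b * w b)‖ := norm_sum_le _ _
    _ ≤ ∑ a, ∑ b, ‖star (v a) * (M a b * w b)‖ :=
        Finset.sum_le_sum fun a _ => norm_sum_le _ _
    _ ≤ ∑ a, ∑ b, ‖M a b‖ * (((∑ a', ‖v a'‖^2) + (∑ b', ‖w b'‖^2))/2) := by
        refine Finset.sum_le_sum fun a _ => Finset.sum_le_sum fun b _ => ?_
        rw [norm_mul, norm_mul, norm_star]
        have hv : ‖v a‖^2 ≤ ∑ a', ‖v a'‖^2 :=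
          Finset.single_le_sum (f := fun a' => ‖v a'‖^2) (fun _ _ => sq_nonneg _) (mem_univ a)
        have hw : ‖w b‖^2 ≤ ∑ b', ‖w b'‖^2 :=
          Finset.single_le_sum (f := fun b' => ‖w b'‖^2) (fun _ _ => sq_nonneg _) (mem_univ b)
        have h1 : ‖v a‖ * ‖w b‖ ≤ ((∑ a', ‖v a'‖^2) + (∑ b', ‖w b'‖^2))/2 := by
          nlinarith [sq_nonneg (‖v a‖ - ‖w b‖)]
        calc ‖v a‖ * (‖M a b‖ * ‖w b‖) = ‖M a b‖ * (‖v a‖ * ‖w b‖) := by ring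
          _ ≤ ‖M a b‖ * (((∑ a', ‖v a'‖^2) + (∑ b', ‖w b'‖^2))/2) :=
              mul_le_mul_of_nonneg_left h1 (norm_nonneg _)
    _ = (∑ a, ∑ b, ‖M a b‖) * (((∑ a, ‖v a‖^2) + (∑ b, ‖w b‖^2))/2) := by
        rw [Finset.sum_mul]
        exact Finset.sum_congr rfl fun a _ => (Finset.sum_mul _ _ _).symm

lemma dotProduct_sum'' {ι n : Type*} [Fintype n] (s : Finset ι) (v : n → ℂ) (w : ι → n → ℂ) :
    v ⬝ᵥ (∑ i ∈ s, w i) = ∑ i ∈ s, v ⬝ᵥ (w i) := by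
  simp only [dotProduct, Finset.sum_apply, Finset.mul_sum]
  exact Finset.sum_comm

lemma QN_eq (d : ℕ) (G : ℤ → Matrix (Fin d) (Fin d) ℂ) (x : ℕ → Fin d → ℂ) (B : ℕ)
    (hGz : ∀ m : ℤ, B < m.natAbs → G m = 0)
    (hker : ∀ i : ℕ, ∑ᶠ j : ℕ, (G ((i : ℤ) - (j : ℤ))) *ᵥ (x j) = 0) (N : ℕ) :
    ∑ c ∈ Finset.range (N+1), ∑ r ∈ Finset.range (N+1),
        star (x r) ⬝ᵥ (G ((r:ℤ) - (c:ℤ))) *ᵥ (x c)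
    = - ∑ r ∈ Finset.Ico (N+1-B) (N+1), ∑ c ∈ Finset.Ico (N+1) (N+B+1),
        star (x r) ⬝ᵥ (G ((r:ℤ) - (c:ℤ))) *ᵥ (x c) := by
  classical
  rw [Finset.sum_comm]
  have hclaim : ∀ r ∈ Finset.range (N+1),
      ∑ c ∈ Finset.range (N+1), (G ((r:ℤ) - (c:ℤ))) *ᵥ (x c)
      = - ∑ c ∈ Finset.Ico (N+1) (N+B+1), (G ((r:ℤ) - (c:ℤ))) *ᵥ (x c) := by
    intro r hr
    have hrN : r ≤ N := by simpa [Nat.lt_succ_iff] using hr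
    have hsupp : (Function.support fun j : ℕ => (G ((r:ℤ) - (j:ℤ))) *ᵥ (x j))
        ⊆ ↑(Finset.range (N+B+1)) := by
      intro j hj
      simp only [Function.mem_support, Ne] at hj
      simp only [Finset.coe_range, Set.mem_Iio]
      by_contra hjN
      push_neg at hjN
      have : ((r:ℤ) - (j:ℤ)).natAbs > B := by omega
      exact hj (by rw [hGz _ this, Matrix.zero_mulVec])
    have h0 : ∑ c ∈ Finset.range (N+B+1), (G ((r:ℤ) - (c:ℤ))) *ᵥ (x c) = 0 := by
      rw [← finsum_eq_finset_sum_of_support_subset _ hsupp]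
      exact hker r
    have hsplit : ∑ c ∈ Finset.range (N+B+1), (G ((r:ℤ) - (c:ℤ))) *ᵥ (x c)
        = (∑ c ∈ Finset.range (N+1), (G ((r:ℤ) - (c:ℤ))) *ᵥ (x c))
          + ∑ c ∈ Finset.Ico (N+1) (N+B+1), (G ((r:ℤ) - (c:ℤ))) *ᵥ (x c) := by
      rw [Finset.range_eq_Ico, Finset.range_eq_Ico]
      exact (Finset.sum_Ico_consecutive (m := 0) (n := N+1) (k := N+B+1) (fun c => (G ((r:ℤ) - (c:ℤ))) *ᵥ (x c)) (by omega) (by omega)).symm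
    rw [hsplit] at h0
    exact eq_neg_of_add_eq_zero_left h0
  have step1 : ∑ r ∈ Finset.range (N+1), ∑ c ∈ Finset.range (N+1),
      star (x r) ⬝ᵥ (G ((r:ℤ) - (c:ℤ))) *ᵥ (x c)
      = - ∑ r ∈ Finset.range (N+1), ∑ c ∈ Finset.Ico (N+1) (N+B+1),
          star (x r) ⬝ᵥ (G ((r:ℤ) - (c:ℤ))) *ᵥ (x c) := by
    rw [← Finset.sum_neg_distrib]
    refine Finset.sum_congr rfl fun r hr => ?_
    rw [← dotProduct_sum'', hclaim r hr, dotProduct_neg, dotProduct_sum'']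
  rw [step1]
  congr 1
  refine (Finset.sum_subset ?_ ?_).symm
  · intro r hr
    simp only [Finset.mem_Ico] at hr
    exact Finset.mem_range.mpr hr.2
  · intro r hrange hnot
    simp only [Finset.mem_range] at hrange
    simp only [Finset.mem_Ico] at hnot
    have hrB : r + B < N + 1 := by omega
    refine Finset.sum_eq_zero fun c hc => ?_
    simp only [Finset.mem_Ico] at hc
    have : ((r:ℤ) - (c:ℤ)).natAbs > B := by omega
    rw [hGz _ this, Matrix.zero_mulVec, dotProduct_zero]

/-- No localized zero modes under open boundary conditions: a half-infinite banded
block-Toeplitz operator whose (Hermitian) symbol is positive definite at every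
momentum has trivial square-summable kernel. -/
theorem toeplitz_posdef_symbol_trivial_kernel (d : ℕ) (hd : 0 < d)
    (G : ℤ → Matrix (Fin d) (Fin d) ℂ)
    (hfin : (Function.support G).Finite)
    (hherm : ∀ m : ℤ, G (-m) = (G m)ᴴ)
    (hpos : ∀ k : ℝ, (toeplitzSymbol d G k).PosDef)
    (x : ℕ → (Fin d → ℂ))
    (hx : Summable fun i : ℕ => ∑ a : Fin d, ‖x i a‖ ^ 2)
    (hker : ∀ i : ℕ, ∑ᶠ j : ℕ, (G ((i : ℤ) - (j : ℤ))).mulVec (x j) = 0) :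
    x = 0 := by
  classical
  obtain ⟨ε, hε, hεb⟩ := uniform_pos d hd G hfin hpos
  set f : ℕ → ℝ := fun i => ∑ a, ‖x i a‖^2 with hf
  have hf0 : ∀ i, 0 ≤ f i := fun i => Finset.sum_nonneg fun a _ => sq_nonneg _
  obtain ⟨B, hGz⟩ : ∃ B : ℕ, ∀ m : ℤ, B < m.natAbs → G m = 0 := by
    refine ⟨hfin.toFinset.sup (fun m => m.natAbs), ?_⟩
    intro m hm
    by_contra h
    have hle := Finset.le_sup (f := fun m : ℤ => m.natAbs) (hfin.mem_toFinset.mpr h)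
    omega
  set CM : ℤ → ℝ := fun m => ∑ a, ∑ b, ‖G m a b‖ with hCM
  have hCM0 : ∀ m, 0 ≤ CM m :=
    fun m => Finset.sum_nonneg fun _ _ => Finset.sum_nonneg fun _ _ => norm_nonneg _
  set C : ℝ := ∑ m ∈ hfin.toFinset, CM m with hC
  have hC0 : 0 ≤ C := Finset.sum_nonneg fun m _ => hCM0 m
  have hCMle : ∀ m, CM m ≤ C := by
    intro m
    by_cases hm : m ∈ hfin.toFinset
    · exact Finset.single_le_sum (fun i _ => hCM0 i) hm
    · have hz : G m = 0 := by
        by_contra h; exact hm (hfin.mem_toFinset.mpr h)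
      have : CM m = 0 := by simp [hCM, hz]
      rw [this]; exact hC0
  -- tail bounds
  set t : ℕ → ℝ := fun M => ∑' k, f (k + M) with ht
  have hsumM : ∀ M : ℕ, Summable fun k => f (k + M) :=
    fun M => (summable_nat_add_iff M).mpr hx
  have hfle : ∀ M i : ℕ, M ≤ i → f i ≤ t M := by
    intro M i hMi
    have h1 : f ((i - M) + M) ≤ ∑' k, f (k + M) :=
      Summable.le_tsum (hsumM M) (i - M) fun j _ => hf0 _
    rwa [Nat.sub_add_cancel hMi] at h1
  have ht0 : ∀ M, 0 ≤ t M := fun M => tsum_nonneg fun k => hf0 _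
  -- main bound for N = M + B
  have main : ∀ j M : ℕ, j ≤ M → ε * f j ≤ (B:ℝ) * ((B:ℝ) * (C * t (M+1))) := by
    intro j M hjM
    set N := M + B with hN
    have key := key_ineq d G hfin x N hεb
    rw [QN_eq d G x B hGz hker N] at key
    have hQre : (- ∑ r ∈ Finset.Ico (N+1-B) (N+1), ∑ c ∈ Finset.Ico (N+1) (N+B+1),
        star (x r) ⬝ᵥ (G ((r:ℤ) - (c:ℤ))) *ᵥ (x c)).re
        ≤ (B:ℝ) * ((B:ℝ) * (C * t (M+1))) := by
      have h1 : ∀ z : ℂ, z.re ≤ ‖z‖ := fun z => Complex.re_le_norm z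
      refine le_trans (h1 _) ?_
      rw [norm_neg]
      refine le_trans (norm_sum_le _ _) ?_
      have hcard1 : ((Finset.Ico (N+1-B) (N+1)).card : ℝ) ≤ (B:ℝ) := by
        rw [Nat.card_Ico]
        have : N + 1 - (N+1-B) ≤ B := by omega
        exact_mod_cast this
      have hcard2 : ((Finset.Ico (N+1) (N+B+1)).card : ℝ) = (B:ℝ) := by
        rw [Nat.card_Ico]
        congr 1
        omega
      have hinner : ∀ r ∈ Finset.Ico (N+1-B) (N+1),
          ‖∑ c ∈ Finset.Ico (N+1) (N+B+1),
            star (x r) ⬝ᵥ (G ((r:ℤ) - (c:ℤ))) *ᵥ (x c)‖ ≤ (B:ℝ) * (C * t (M+1)) := by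
        intro r hr
        simp only [Finset.mem_Ico] at hr
        have hrge : M + 1 ≤ r := by omega
        refine le_trans (norm_sum_le _ _) ?_
        have hterm : ∀ c ∈ Finset.Ico (N+1) (N+B+1),
            ‖star (x r) ⬝ᵥ (G ((r:ℤ) - (c:ℤ))) *ᵥ (x c)‖ ≤ C * t (M+1) := by
          intro c hc
          simp only [Finset.mem_Ico] at hc
          have hcge : M + 1 ≤ c := by omega
          refine le_trans (dot_bound (G ((r:ℤ)-(c:ℤ))) (x r) (x c)) ?_
          have e1 : (∑ a, ∑ b, ‖G ((r:ℤ)-(c:ℤ)) a b‖) = CM ((r:ℤ)-(c:ℤ)) := rfl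
          rw [e1]
          have e2 : ((∑ a, ‖x r a‖^2) + (∑ b, ‖x c b‖^2))/2 ≤ t (M+1) := by
            have := hfle (M+1) r hrge
            have := hfle (M+1) c hcge
            simp only [hf] at *
            linarith
          have e3 : 0 ≤ ((∑ a, ‖x r a‖^2) + (∑ b, ‖x c b‖^2))/2 := by
            have := hf0 r; have := hf0 c
            simp only [hf] at *
            linarith
          exact mul_le_mul (hCMle _) e2 e3 hC0
        refine le_trans (Finset.sum_le_sum hterm) ?_
        rw [Finset.sum_const, nsmul_eq_mul, hcard2]
      refine le_trans (Finset.sum_le_sum hinner) ?_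
      rw [Finset.sum_const, nsmul_eq_mul]
      exact mul_le_mul_of_nonneg_right hcard1
        (mul_nonneg (Nat.cast_nonneg B) (mul_nonneg hC0 (ht0 _)))
    have hfM : ε * f j ≤ ε * ∑ c ∈ Finset.range (N+1), f c := by
      apply mul_le_mul_of_nonneg_left _ hε.le
      exact Finset.single_le_sum (fun i _ => hf0 i) (Finset.mem_range.mpr (by omega))
    calc ε * f j ≤ ε * ∑ c ∈ Finset.range (N+1), f c := hfM
      _ ≤ _ := key
      _ ≤ _ := hQre
  -- limit
  have htend : Filter.Tendsto (fun M : ℕ => (B:ℝ) * ((B:ℝ) * (C * t (M+1))))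
      Filter.atTop (nhds 0) := by
    have h1 : Filter.Tendsto (fun M : ℕ => t (M+1)) Filter.atTop (nhds 0) := by
      have := tendsto_sum_nat_add f
      exact this.comp (Filter.tendsto_add_atTop_nat 1)
    have := ((h1.const_mul C).const_mul (B:ℝ)).const_mul (B:ℝ)
    simpa using this
  have hzero : ∀ j : ℕ, x j = 0 := by
    intro j
    have hj : ε * f j ≤ 0 := by
      refine ge_of_tendsto htend ?_
      rw [Filter.eventually_atTop]
      exact ⟨j, fun M hM => main j M hM⟩
    have hfj0 : f j = 0 := le_antisymm (by nlinarith [hf0 j]) (hf0 j)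
    simp only [hf] at hfj0
    have hall := (Finset.sum_eq_zero_iff_of_nonneg
      (fun a _ => sq_nonneg (‖x j a‖))).mp hfj0
    funext a
    have h2 := hall a (Finset.mem_univ a)
    have h3 : ‖x j a‖ = 0 := by
      nlinarith [norm_nonneg (x j a)]
    simpa using norm_eq_zero.mp h3
  funext j
  exact hzero j
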